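/- arXiv:1904.13101 — 8 statements merged into one kernel-verified Lean document; each statement's English description precedes it below -/
import Mathlib

section
/- In a binary causal model, if X⃗ = x⃗ is an actual cause of φ (according to the modified Halpern-Pearl definition), then every alternative setting x⃗′ of the cause variables witnessing condition AC2 satisfies x′ᵢ = ¬xᵢ for every index i; i.e., in Boolean models the counterfactual setting must flip every cause variable. -/
/-- A Boolean causal model: each endogenous variable `v : V` has a structural
equation `F v` computing its value from the exogenous assignment and the
values of the other endogenous variables. -/
structure CausalModel (U V : Type) where
  F : V → (U → Bool) → (V → Bool) → Bool

/-- `a` is a solution of the model `M` under context `u` and intervention `I`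
(`I v = some b` means `v` has been set to the constant `b`). -/
def Solves {U V : Type} (M : CausalModel U V) (u : U → Bool) (I : V → Option Bool)
    (a : V → Bool) : Prop :=
  ∀ v, a v = (I v).getD (M.F v u a)

/-- The intervention `[X⃗ ← x⃗', W⃗ ← w⃗]`. -/
def ivn {V : Type} [DecidableEq V] (Xs : Finset V) (x' : V → Bool) (W : Finset V)
    (w : V → Bool) : V → Option Bool :=
  fun v => if v ∈ Xs then some (x' v) else if v ∈ W then some (w v) else none

/-- AC1: the cause and the effect hold in the actual evaluation `act`. -/
def AC1 {U V : Type} (_M : CausalModel U V) (_u : U → Bool) (act : V → Bool)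
    (Xs : Finset V) (x : V → Bool) (φ : (V → Bool) → Prop) : Prop :=
  (∀ v ∈ Xs, act v = x v) ∧ φ act

/-- AC2: some contingency `W⃗` (fixed at its actual values) and some setting `x⃗'`
of the cause variables make `¬φ` hold. -/
def AC2 {U V : Type} [DecidableEq V] (M : CausalModel U V) (u : U → Bool) (act : V → Bool)
    (Xs : Finset V) (φ : (V → Bool) → Prop) : Prop :=
  ∃ (W : Finset V) (x' a : V → Bool), Solves M u (ivn Xs x' W act) a ∧ ¬ φ a

/-- AC3: minimality — no strict subset of the cause satisfies AC1 and AC2. -/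
def AC3 {U V : Type} [DecidableEq V] (M : CausalModel U V) (u : U → Bool) (act : V → Bool)
    (Xs : Finset V) (x : V → Bool) (φ : (V → Bool) → Prop) : Prop :=
  ∀ Xs' : Finset V, Xs' ⊂ Xs → ¬ (AC1 M u act Xs' x φ ∧ AC2 M u act Xs' φ)

/-- Modified Halpern–Pearl actual cause. -/
def IsCause {U V : Type} [DecidableEq V] (M : CausalModel U V) (u : U → Bool) (act : V → Bool)
    (Xs : Finset V) (x : V → Bool) (φ : (V → Bool) → Prop) : Prop :=
  AC1 M u act Xs x φ ∧ AC2 M u act Xs φ ∧ AC3 M u act Xs x φ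

/-- Lemma 1 (negation lemma): in a binary model, if `X⃗ = x⃗` is an actual cause
of `φ`, then every setting `x⃗'` witnessing AC2 flips every cause variable. -/
theorem stmt0 {U V : Type} [DecidableEq V] (M : CausalModel U V) (u : U → Bool)
    (act : V → Bool) (hact : Solves M u (fun _ => none) act)
    (huniq : ∀ I : V → Option Bool, ∃! a, Solves M u I a)
    (Xs : Finset V) (x : V → Bool) (φ : (V → Bool) → Prop)
    (hcause : IsCause M u act Xs x φ) :
    ∀ (W : Finset V) (x' a : V → Bool),
      Solves M u (ivn Xs x' W act) a → ¬ φ a → ∀ v ∈ Xs, x' v = ! x v := by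
  intro W x' a hsol hnφ v hv
  obtain ⟨⟨hagree, hφ⟩, _, hAC3⟩ := hcause
  by_contra hne
  have hx : x' v = x v := by
    cases h : x v <;> cases h' : x' v <;> simp_all
  have hsub : Xs.erase v ⊂ Xs := Finset.erase_ssubset hv
  apply hAC3 (Xs.erase v) hsub
  refine ⟨⟨fun w hw => hagree w (Finset.mem_of_mem_erase hw), hφ⟩,
    insert v W, x', a, ?_, hnφ⟩
  have hivn : ivn (Xs.erase v) x' (insert v W) act = ivn Xs x' W act := by
    funext w
    by_cases hwv : w = v
    · subst hwv
      simp [ivn, hv, hx]; exact hagree _ hv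
    · simp [ivn, hwv, Finset.mem_erase, Finset.mem_insert]
  rw [hivn]
  exact hsol
end

section
/- In an acyclic Boolean causal model under context u⃗, intervening on a set of variables W⃗ by fixing them to their values w⃗ in the unique actual solution yields a model whose unique solution equals the original actual solution; consequently (M,u⃗) ⊨ φ iff (M,u⃗) ⊨ [W⃗ ← w⃗]φ for every Boolean combination φ of primitive events. -/
/-- Intervening by fixing `W⃗` at its actual values does not change the unique
solution; hence `(M,u⃗) ⊨ φ` iff `(M,u⃗) ⊨ [W⃗ ← w⃗]φ`. -/
theorem stmt4 {U V : Type} [DecidableEq V] (M : CausalModel U V) (u : U → Bool)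
    (act : V → Bool) (hact : Solves M u (fun _ => none) act)
    (huniq : ∀ I : V → Option Bool, ∃! a, Solves M u I a)
    (W : Finset V) :
    Solves M u (fun v => if v ∈ W then some (act v) else none) act ∧
    (∀ a, Solves M u (fun v => if v ∈ W then some (act v) else none) a → a = act) ∧
    (∀ φ : (V → Bool) → Prop,
      φ act ↔ ∀ a, Solves M u (fun v => if v ∈ W then some (act v) else none) a → φ a) := by
  have hsol : Solves M u (fun v => if v ∈ W then some (act v) else none) act := by
    intro v
    by_cases h : v ∈ W <;> simp [h, Option.getD]
    exact (hact v).trans (by simp)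
  have huni : ∀ a, Solves M u (fun v => if v ∈ W then some (act v) else none) a → a = act := by
    intro a ha
    obtain ⟨b, hb, hub⟩ := huniq (fun v => if v ∈ W then some (act v) else none)
    exact (hub a ha).trans (hub act hsol).symm
  exact ⟨hsol, huni, fun φ => ⟨fun h a ha => (huni a ha) ▸ h, fun h => h act hsol⟩⟩
end

section
/- Soundness of the SAT encoding for AC2: Let F := ¬φ ∧ (literals fixing each exogenous variable Uᵢ to uᵢ) ∧ ⋀_{Vᵢ ∉ X⃗} ((Vᵢ ↔ F_{Vᵢ}) ∨ ℓ(Vᵢ = vᵢ)) ∧ ⋀ᵢ ℓ(Xᵢ = ¬xᵢ), where ℓ(Y = y) is the literal Y if y = 1 and ¬Y if y = 0, and v⃗ is the actual evaluation of (M,u⃗). If F is satisfiable by an assignment v⃗′, then taking W⃗ to be the set of endogenous variables Vⱼ with v′ⱼ = vⱼ, condition AC2 holds: (M,u⃗) ⊨ [X⃗ ← ¬x⃗, W⃗ ← w⃗]¬φ, where w⃗ is the restriction of v⃗ to W⃗. -/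
/-- Satisfaction of the SAT-encoding formula `F` for AC2: `¬φ` holds, every
endogenous variable outside the candidate cause either follows its equation or
keeps its actual value, and every cause variable is flipped. (The exogenous
literals are encoded by evaluating the equations at the fixed context `u`.) -/
def FSat {U V : Type} (M : CausalModel U V) (u : U → Bool) (act : V → Bool)
    (Xs : Finset V) (x : V → Bool) (φ : (V → Bool) → Prop) (a : V → Bool) : Prop :=
  ¬ φ a ∧ (∀ v, v ∉ Xs → (a v = M.F v u a ∨ a v = act v)) ∧ (∀ v ∈ Xs, a v = ! x v)

/-- Satisfaction of the SAT-encoding formula `G` for AC3: as `F`, but the cause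
variables are only constrained by the tautological disjunction `Xᵢ ∨ ¬Xᵢ`. -/
def GSat {U V : Type} (M : CausalModel U V) (u : U → Bool) (act : V → Bool)
    (Xs : Finset V) (_x : V → Bool) (φ : (V → Bool) → Prop) (a : V → Bool) : Prop :=
  ¬ φ a ∧ (∀ v, v ∉ Xs → (a v = M.F v u a ∨ a v = act v)) ∧
    (∀ v ∈ Xs, a v = true ∨ a v = false)

/-- Soundness of the SAT encoding for AC2: a satisfying assignment `v'` of `F`
yields, with `W⃗ := {Vⱼ ∉ X⃗ | v'ⱼ = vⱼ}`, the counterfactual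
`(M,u⃗) ⊨ [X⃗ ← ¬x⃗, W⃗ ← w⃗]¬φ`. -/
theorem stmt5 {U V : Type} [Fintype V] [DecidableEq V] (M : CausalModel U V)
    (u : U → Bool) (act : V → Bool) (hact : Solves M u (fun _ => none) act)
    (huniq : ∀ I : V → Option Bool, ∃! a, Solves M u I a)
    (Xs : Finset V) (x : V → Bool) (φ : (V → Bool) → Prop)
    (v' : V → Bool) (hF : FSat M u act Xs x φ v') :
    Solves M u
      (ivn Xs (fun v => ! x v)
        (Finset.univ.filter fun v => v ∉ Xs ∧ v' v = act v) act) v' ∧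
    (∀ a, Solves M u
        (ivn Xs (fun v => ! x v)
          (Finset.univ.filter fun v => v ∉ Xs ∧ v' v = act v) act) a → ¬ φ a) := by
  obtain ⟨hφ, hout, hin⟩ := hF
  have hsol : Solves M u
      (ivn Xs (fun v => ! x v)
        (Finset.univ.filter fun v => v ∉ Xs ∧ v' v = act v) act) v' := by
    intro v
    by_cases hx : v ∈ Xs
    · simp [ivn, hx, hin v hx]
    · by_cases hw : v' v = act v
      · simp [ivn, hx, hw, Finset.mem_filter]
      · rcases hout v hx with h | h
        · simpa [ivn, hx, hw, Finset.mem_filter] using h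
        · exact absurd h hw
  refine ⟨hsol, fun a ha => ?_⟩
  obtain ⟨b, _, hb⟩ := huniq (ivn Xs (fun v => ! x v)
        (Finset.univ.filter fun v => v ∉ Xs ∧ v' v = act v) act)
  rwa [(hb a ha).trans (hb v' hsol).symm]
end

section
/- Completeness of the SAT encoding for AC2 with flipped cause: if there exists a set W⃗ of endogenous variables such that (M,u⃗) ⊨ [X⃗ ← ¬x⃗, W⃗ ← w⃗]¬φ (with w⃗ the actual values of W⃗), then the formula F := ¬φ ∧ (exogenous literals for u⃗) ∧ ⋀_{Vᵢ ∉ X⃗} ((Vᵢ ↔ F_{Vᵢ}) ∨ ℓ(Vᵢ = vᵢ)) ∧ ⋀ᵢ ℓ(Xᵢ = ¬xᵢ) is satisfiable; a satisfying assignment is given by the unique solution of the intervened model M_{X⃗←¬x⃗, W⃗←w⃗} under u⃗. -/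
/-- Completeness of the SAT encoding for AC2 with flipped cause: the unique
solution of the intervened model `M_{X⃗←¬x⃗, W⃗←w⃗}` (with `w⃗` the actual
values) satisfying `¬φ` is a satisfying assignment of `F`. -/
theorem stmt6 {U V : Type} [DecidableEq V] (M : CausalModel U V) (u : U → Bool)
    (act : V → Bool) (hact : Solves M u (fun _ => none) act)
    (huniq : ∀ I : V → Option Bool, ∃! a, Solves M u I a)
    (Xs : Finset V) (x : V → Bool) (φ : (V → Bool) → Prop)
    (W : Finset V) (a : V → Bool)
    (hsol : Solves M u (ivn Xs (fun v => ! x v) W act) a) (hnφ : ¬ φ a) :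
    FSat M u act Xs x φ a ∧ ∃ v', FSat M u act Xs x φ v' := by
  have hF : FSat M u act Xs x φ a := by
    refine ⟨hnφ, fun v hv => ?_, fun v hv => ?_⟩
    · have := hsol v
      simp [ivn, hv] at this
      by_cases hw : v ∈ W
      · right; simpa [hw] using this
      · left; simpa [hw] using this
    · have := hsol v
      simpa [ivn, hv] using this
  exact ⟨hF, a, hF⟩
end

section
/- If the AC2-formula F (built for candidate cause X⃗ = x⃗ with each cause variable forced to ¬xᵢ) is unsatisfiable, then there is no set W⃗ of endogenous variables such that (M,u⃗) ⊨ [X⃗ ← ¬x⃗, W⃗ ← w⃗]¬φ with w⃗ the actual values of W⃗; combined with the lemma that in Boolean models the AC2 witness setting must be x⃗′ = ¬x⃗, this implies AC2 fails for X⃗ = x⃗. -/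
/-- If the AC2-formula `F` is unsatisfiable, then no contingency `W⃗` makes the
flipped counterfactual `(M,u⃗) ⊨ [X⃗ ← ¬x⃗, W⃗ ← w⃗]¬φ` hold; combined with the
negation lemma (every AC2 witness flips all cause variables), AC2 fails. -/
theorem stmt8 {U V : Type} [DecidableEq V] (M : CausalModel U V) (u : U → Bool)
    (act : V → Bool) (hact : Solves M u (fun _ => none) act)
    (huniq : ∀ I : V → Option Bool, ∃! a, Solves M u I a)
    (Xs : Finset V) (x : V → Bool) (φ : (V → Bool) → Prop)
    (hAC1 : AC1 M u act Xs x φ)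
    (hunsat : ¬ ∃ a, FSat M u act Xs x φ a)
    (hflip : ∀ (W : Finset V) (x' a : V → Bool),
      Solves M u (ivn Xs x' W act) a → ¬ φ a → ∀ v ∈ Xs, x' v = ! x v) :
    (¬ ∃ (W : Finset V) (a : V → Bool),
        Solves M u (ivn Xs (fun v => ! x v) W act) a ∧ ¬ φ a) ∧
    ¬ AC2 M u act Xs φ := by

  have key : ∀ (W : Finset V) (x' a : V → Bool),
      Solves M u (ivn Xs x' W act) a → ¬ φ a → False := by
    intro W x' a hs hnφ
    have hx' := hflip W x' a hs hnφ
    apply hunsat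
    refine ⟨a, hnφ, ?_, ?_⟩
    · intro v hv
      have := hs v
      simp [ivn, hv] at this
      by_cases hw : v ∈ W
      · right; simp [hw] at this; simp [this]
      · left; simp [hw] at this; exact this
    · intro v hv
      have := hs v
      simp [ivn, hv] at this
      rw [this, hx' v hv]
  constructor
  · rintro ⟨W, a, hs, hnφ⟩
    exact key W _ a hs hnφ
  · rintro ⟨W, x', a, hs, hnφ⟩
    exact key W x' a hs hnφ
end

section
/- In a binary tree causal model of height h where each internal node's value is the disjunction of its two children and leaves are set by exogenous variables all equal to 1, the conjunction of any two sibling leaves n₁ = 1 ∧ n₂ = 1 does not satisfy AC2 for the effect root = 1: for every contingency W⃗ fixed at actual values, flipping both leaves to 0 still leaves the root equal to 1 (provided h ≥ 2, so some other leaf feeds the root). -/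
/-- The binary tree causal model of height `h`: nodes are heap-indexed
`1, …, 2^(h+1) - 1` (index 0 is a dummy), node `i` with `i < 2^h` is internal
with value the disjunction of its children `2i` and `2i+1`, and nodes
`i ≥ 2^h` are leaves set by their exogenous variables. -/
def BTM (h : ℕ) : CausalModel (Fin (2 ^ (h + 1))) (Fin (2 ^ (h + 1))) where
  F i u a :=
    if _h0 : i.val = 0 then true
    else if hle : 2 ^ h ≤ i.val then u i
    else
      a ⟨2 * i.val, by
        have h2 : 2 ^ (h + 1) = 2 ^ h * 2 := pow_succ 2 h
        have h3 := i.isLt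
        omega⟩ ||
      a ⟨2 * i.val + 1, by
        have h2 : 2 ^ (h + 1) = 2 ^ h * 2 := pow_succ 2 h
        have h3 := i.isLt
        omega⟩

/-- In the binary tree model of height `h ≥ 2` with all exogenous variables 1,
flipping two sibling leaves `2k` and `2k+1` to 0 under any contingency `W⃗`
fixed at actual values (all 1) still leaves the root equal to 1. -/
theorem stmt15 (h k : ℕ) (hh : 2 ≤ h)
    (hk1 : 2 ^ h ≤ 2 * k) (hk2 : 2 * k + 1 < 2 ^ (h + 1)) :
    ∀ (W : Finset (Fin (2 ^ (h + 1)))) (a : Fin (2 ^ (h + 1)) → Bool),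
      Solves (BTM h) (fun _ => true)
        (ivn ({⟨2 * k, by omega⟩, ⟨2 * k + 1, hk2⟩} : Finset (Fin (2 ^ (h + 1))))
          (fun _ => false) W (fun _ => true)) a →
      a ⟨1, by
        have h2 : 2 ^ (h + 1) = 2 ^ h * 2 := pow_succ 2 h
        have h3 : 0 < 2 ^ h := by positivity
        omega⟩ = true := by
  intro W a ha
  have hp : 2 ^ (h + 1) = 2 * 2 ^ h := by ring
  have h4 : 4 ≤ 2 ^ h := by
    calc 4 = 2 ^ 2 := by norm_num
    _ ≤ 2 ^ h := Nat.pow_le_pow_right (by norm_num) hh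
  have key : ∀ m : ℕ, ∀ i : Fin (2 ^ (h + 1)), 2 ^ (h + 1) ≤ i.val + m →
      1 ≤ i.val → i.val ≠ k → i.val ≠ 2 * k → i.val ≠ 2 * k + 1 → a i = true := by
    intro m
    induction m with
    | zero =>
      intro i hm _ _ _ _
      exact absurd i.isLt (by omega)
    | succ m ih =>
      intro i hm h1 hne1 hne2 hne3
      have hs := ha i
      rw [hs]
      have hni : i ∉ ({⟨2 * k, by omega⟩, ⟨2 * k + 1, hk2⟩} : Finset (Fin (2 ^ (h + 1)))) := by
        simp only [Finset.mem_insert, Finset.mem_singleton, Fin.ext_iff]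
        omega
      unfold ivn
      rw [if_neg hni]
      by_cases hw : i ∈ W
      · rw [if_pos hw]; rfl
      · rw [if_neg hw]
        show (BTM h).F i (fun _ => true) a = true
        unfold BTM
        simp only
        rw [dif_neg (by omega : ¬ i.val = 0)]
        by_cases hle : 2 ^ h ≤ i.val
        · rw [dif_pos hle]
        · rw [dif_neg hle]
          by_cases hck : 2 * i.val = k
          · have : a ⟨2 * i.val + 1, by omega⟩ = true := by
              apply ih <;> simp only <;> omega
            rw [this, Bool.or_true]
          · have : a ⟨2 * i.val, by omega⟩ = true := by
              apply ih <;> simp only <;> omega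
            rw [this, Bool.true_or]
  exact key (2 ^ (h + 1)) _ (by simp) (by simp) (by simp; omega) (by simp; omega) (by simp; omega)
end

section
/- Subset-cause criterion in Algorithm 2: let v⃗′ be a satisfying assignment of G, and let S be the set of indices j of cause variables Xⱼ such that v′ differs from the actual value xⱼ at Xⱼ and Xⱼ's equation does not evaluate to v′'s value of Xⱼ under v⃗′. If |S| < ℓ (the size of the cause), then the restricted vector (Xⱼ = xⱼ)_{j∈S} is a strict sub-vector of X⃗ = x⃗ for which AC2 holds (witnessed by the contingency of all variables keeping their actual values in v⃗′), and hence AC3 fails for X⃗ = x⃗ provided AC1 holds for the sub-vector. -/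
/-- Algorithm 2's subset-cause criterion: if `v'` satisfies `G` and the set
`S` of cause variables whose value in `v'` differs from the actual cause value
and whose equation does not evaluate to their `v'`-value is a strict subset of
the cause (fewer than `ℓ` elements), then AC2 holds for the sub-cause `S`,
and (given AC1 for the sub-cause) AC3 fails for `X⃗ = x⃗`. -/
theorem stmt17 {U V : Type} [Fintype V] [DecidableEq V] (M : CausalModel U V)
    (u : U → Bool) (act : V → Bool) (hact : Solves M u (fun _ => none) act)
    (huniq : ∀ I : V → Option Bool, ∃! a, Solves M u I a)
    (Xs : Finset V) (x : V → Bool) (φ : (V → Bool) → Prop)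
    (hcard : 2 ≤ Xs.card) (hAC1 : AC1 M u act Xs x φ)
    (v' : V → Bool) (hG : GSat M u act Xs x φ v')
    (hS : (Xs.filter fun v => v' v ≠ x v ∧ v' v ≠ M.F v u v').card < Xs.card)
    (hAC1S : AC1 M u act (Xs.filter fun v => v' v ≠ x v ∧ v' v ≠ M.F v u v') x φ) :
    AC2 M u act (Xs.filter fun v => v' v ≠ x v ∧ v' v ≠ M.F v u v') φ ∧
    ¬ AC3 M u act Xs x φ := by
  classical
  set S := Xs.filter fun v => v' v ≠ x v ∧ v' v ≠ M.F v u v' with hSdef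
  have hAC2 : AC2 M u act S φ := by
    refine ⟨Finset.univ.filter (fun v => v ∉ S ∧ v' v = act v), v', v', ?_, hG.1⟩
    intro v
    unfold ivn
    by_cases hvS : v ∈ S
    · simp [hvS]
    · simp only [hvS, if_false]
      by_cases hvW : v ∈ Finset.univ.filter (fun v => v ∉ S ∧ v' v = act v)
      · simp only [hvW, if_true, Option.getD_some]
        exact (Finset.mem_filter.mp hvW).2.2
      · simp only [hvW, if_false, Option.getD_none]
        have hnW : ¬ (v ∉ S ∧ v' v = act v) := by
          intro h; exact hvW (Finset.mem_filter.mpr ⟨Finset.mem_univ v, h⟩)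
        have hne : v' v ≠ act v := fun h => hnW ⟨hvS, h⟩
        by_cases hvX : v ∈ Xs
        · have : ¬ (v' v ≠ x v ∧ v' v ≠ M.F v u v') := by
            intro h; exact hvS (Finset.mem_filter.mpr ⟨hvX, h⟩)
          rcases not_and_or.mp this with h | h
          · exact absurd ((not_not.mp h).trans (hAC1.1 v hvX).symm) hne
          · exact not_not.mp h
        · rcases hG.2.1 v hvX with h | h
          · exact h
          · exact absurd h hne
  refine ⟨hAC2, fun hAC3 => ?_⟩
  have hsub : S ⊂ Xs := by
    refine Finset.ssubset_iff_subset_ne.mpr ⟨Finset.filter_subset _ _, ?_⟩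
    intro h; rw [h] at hS; exact lt_irrefl _ hS
  exact hAC3 S hsub ⟨hAC1S, hAC2⟩
end

section
/- Validity of non-minimal W⃗: if AC2 holds with witness set W⃗ (fixed at actual values) and W⃗′ ⊇ W⃗ is any superset of endogenous variables disjoint from X⃗ such that every variable in W⃗′ takes its actual value in the unique solution of the intervened model M_{X⃗←x⃗′, W⃗←w⃗} under u⃗, then AC2 also holds with witness W⃗′. -/
/-- Validity of non-minimal `W⃗`: if AC2 holds with witness `W⃗` via the
counterfactual solution `a`, and `W⃗' ⊇ W⃗` is disjoint from the cause and
all its variables take their actual values in `a`, then AC2 also holds with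
witness `W⃗'`. -/
theorem stmt19 {U V : Type} [DecidableEq V] (M : CausalModel U V) (u : U → Bool)
    (act : V → Bool) (hact : Solves M u (fun _ => none) act)
    (huniq : ∀ I : V → Option Bool, ∃! a, Solves M u I a)
    (Xs : Finset V) (x' : V → Bool) (φ : (V → Bool) → Prop)
    (W W' : Finset V) (a : V → Bool)
    (hsol : Solves M u (ivn Xs x' W act) a) (hnφ : ¬ φ a)
    (hWW' : W ⊆ W') (hdisj : Disjoint W' Xs)
    (hvals : ∀ v ∈ W', a v = act v) :
    ∃ b, Solves M u (ivn Xs x' W' act) b ∧ ¬ φ b := by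
  refine ⟨a, fun v => ?_, hnφ⟩
  have h := hsol v
  unfold ivn at *
  by_cases hx : v ∈ Xs
  · simpa [hx] using h
  · by_cases hw : v ∈ W'
    · simp [hx, hw, hvals v hw]
    · have hw0 : v ∉ W := fun h' => hw (hWW' h')
      simpa [hx, hw, hw0] using h
end
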